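/- The function u : ℝ → ℝ defined by u(x) = 1 − cos(x) satisfies u'(x) + u'''(x) = 0 for all x ∈ ℝ, together with u(0) = 0, u(2π) = 0, u'(0) = 0, u'(2π) = 0, and yet u is not identically zero on [0, 2π]. (Hence, viewed as a stationary solution of the linear KdV equation u_t + u_x + u_xxx = 0 on [0, 2π] with homogeneous boundary conditions u(t,0) = u(t,2π) = u_x(t,2π) = 0, it is a nonzero solution whose output y(t) = u_x(t,0) vanishes identically, so the system with this output is not observable when L = 2π.) -/
import Mathlib

open Real

lemma deriv_one_sub_cos : deriv (fun y : ℝ => 1 - Real.cos y) = Real.sin := by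
  funext x
  rw [deriv_const_sub, Real.deriv_cos]
  ring

lemma iter3 : iteratedDeriv 3 (fun y : ℝ => 1 - Real.cos y) = fun x => -Real.sin x := by
  rw [show (3:ℕ) = 2 + 1 from rfl, iteratedDeriv_succ, show (2:ℕ) = 1 + 1 from rfl,
    iteratedDeriv_succ, iteratedDeriv_one, deriv_one_sub_cos]
  rw [Real.deriv_sin]
  funext x
  exact Real.deriv_cos

/-- The function `u(x) = 1 - cos x` satisfies `u' + u''' = 0` on `ℝ`, vanishes together with its
derivative at `0` and `2π`, and yet is not identically zero on `[0, 2π]`.  Hence, viewed as a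
stationary solution of the linear KdV equation, it is a nonzero solution with identically
vanishing output `y(t) = u_x(t,0)`, so the system is not observable when `L = 2π`. -/
theorem kdv_not_observable_two_pi :
    (∀ x : ℝ, deriv (fun y => 1 - Real.cos y) x
        + iteratedDeriv 3 (fun y => 1 - Real.cos y) x = 0) ∧
    (1 - Real.cos (0:ℝ) = 0) ∧
    (1 - Real.cos (2 * Real.pi) = 0) ∧
    (deriv (fun y => 1 - Real.cos y) 0 = 0) ∧
    (deriv (fun y => 1 - Real.cos y) (2 * Real.pi) = 0) ∧
    ¬ (∀ x ∈ Set.Icc (0:ℝ) (2 * Real.pi), (1:ℝ) - Real.cos x = 0) := by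
  refine ⟨?_, by simp, by simp [Real.cos_two_pi], ?_, ?_, ?_⟩
  · intro x; rw [deriv_one_sub_cos, iter3]; ring
  · rw [deriv_one_sub_cos]; simp
  · rw [deriv_one_sub_cos]; simp [Real.sin_two_pi]
  · intro h
    have := h Real.pi ⟨Real.pi_pos.le, by linarith [Real.pi_pos]⟩
    simp [Real.cos_pi] at this
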